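/- arXiv:math/0602353 — 4 statements merged into one kernel-verified Lean document; each statement's English description precedes it below -/
import Mathlib

section
/- Let B be a Blaschke product with zero sequence {zₙ}, let K > 0 and 0 < δ < 1. Let w ∈ 𝔻 be such that β(w, zₙ) > 1 for every n, and suppose there exists ζ ∈ 𝔻 with β(ζ, w) ≤ K and |B(ζ)| > δ. Then |B(w)| ≥ δ^{2e^{2K}}. -/
open Complex Metric Set

/-- The open unit disk in the complex plane. -/
def unitDisk : Set ℂ := Metric.ball 0 1

/-- The pseudohyperbolic distance `ρ(z,w) = |(z-w)/(1 - conj(w) z)|`. -/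
noncomputable def pseudoDist (z w : ℂ) : ℝ :=
  ‖(z - w) / (1 - (starRingEnd ℂ) w * z)‖

/-- The hyperbolic distance `β(z,w) = (1/2) log((1+ρ)/(1-ρ))`. -/
noncomputable def hypDist (z w : ℂ) : ℝ :=
  (1 / 2) * Real.log ((1 + pseudoDist z w) / (1 - pseudoDist z w))

/-- A single Blaschke factor with zero `a`. -/
noncomputable def blaschkeFactor (a z : ℂ) : ℂ :=
  ((starRingEnd ℂ) a / (‖a‖ : ℂ)) * ((a - z) / (1 - (starRingEnd ℂ) a * z))

/-- `B` is the Blaschke product with zero sequence `a` (and a factor `z^m`):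
the `aₙ` lie in `𝔻 ∖ {0}` and satisfy the Blaschke condition `Σₙ (1 - |aₙ|) < ∞`. -/
def IsBlaschkeProduct (B : ℂ → ℂ) (m : ℕ) (a : ℕ → ℂ) : Prop :=
  (∀ n, a n ∈ unitDisk ∧ a n ≠ 0) ∧
  Summable (fun n => 1 - ‖a n‖) ∧
  ∀ z ∈ unitDisk, B z = z ^ m * ∏' n, blaschkeFactor (a n) z

lemma mem_unitDisk {z : ℂ} : z ∈ unitDisk ↔ ‖z‖ < 1 := by
  simp [unitDisk, Metric.mem_ball, Complex.dist_eq]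

lemma one_sub_conj_mul_ne_zero {w z : ℂ} (hw : ‖w‖ < 1) (hz : ‖z‖ < 1) :
    1 - (starRingEnd ℂ) w * z ≠ 0 := by
  intro h
  have h1 : (starRingEnd ℂ) w * z = 1 := by linear_combination -h
  have : ‖(starRingEnd ℂ) w * z‖ < 1 := by
    rw [norm_mul, Complex.norm_conj]
    nlinarith [norm_nonneg w, norm_nonneg z]
  rw [h1] at this; simp at this

lemma pseudoDist_nonneg (z w : ℂ) : 0 ≤ pseudoDist z w := norm_nonneg _

lemma pseudoDist_symm (z w : ℂ) : pseudoDist z w = pseudoDist w z := by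
  unfold pseudoDist
  rw [norm_div, norm_div]
  congr 1
  · exact norm_sub_rev z w
  · rw [← Complex.norm_conj (1 - (starRingEnd ℂ) w * z)]
    congr 1
    simp [map_sub, map_mul]
    ring

lemma normSq_key (z w : ℂ) :
    Complex.normSq (1 - (starRingEnd ℂ) w * z) - Complex.normSq (z - w)
      = (1 - Complex.normSq z) * (1 - Complex.normSq w) := by
  simp [Complex.normSq_apply, Complex.sub_re, Complex.sub_im, Complex.mul_re, Complex.mul_im,
    Complex.conj_re, Complex.conj_im, Complex.one_re, Complex.one_im]
  ring

lemma pseudoDist_lt_one {z w : ℂ} (hz : ‖z‖ < 1) (hw : ‖w‖ < 1) :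
    pseudoDist z w < 1 := by
  have hd := one_sub_conj_mul_ne_zero hw hz
  have hdpos : 0 < ‖1 - (starRingEnd ℂ) w * z‖ := norm_pos_iff.mpr hd
  unfold pseudoDist
  rw [norm_div, div_lt_one hdpos]
  have h1 : Complex.normSq z < 1 := by rw [← Complex.sq_norm]; nlinarith [norm_nonneg z]
  have h2 : Complex.normSq w < 1 := by rw [← Complex.sq_norm]; nlinarith [norm_nonneg w]
  have hk := normSq_key z w
  have e1 : ‖z - w‖ ^ 2 = Complex.normSq (z - w) := Complex.sq_norm _
  have e2 : ‖1 - (starRingEnd ℂ) w * z‖ ^ 2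
      = Complex.normSq (1 - (starRingEnd ℂ) w * z) := Complex.sq_norm _
  nlinarith [norm_nonneg (z - w), hdpos]

lemma normSq_sub' (u v : ℂ) :
    Complex.normSq (u - v) = Complex.normSq u + Complex.normSq v - 2 * ((starRingEnd ℂ) v * u).re := by
  simp [Complex.normSq_apply, Complex.sub_re, Complex.sub_im, Complex.mul_re, Complex.mul_im,
    Complex.conj_re, Complex.conj_im]
  ring

lemma normSq_one_sub' (u v : ℂ) :
    Complex.normSq (1 - (starRingEnd ℂ) v * u)
      = 1 + Complex.normSq v * Complex.normSq u - 2 * ((starRingEnd ℂ) v * u).re := by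
  simp [Complex.normSq_apply, Complex.sub_re, Complex.sub_im, Complex.mul_re, Complex.mul_im,
    Complex.conj_re, Complex.conj_im, Complex.one_re, Complex.one_im]
  ring

lemma model_triangle {u v : ℂ} (hu : ‖u‖ < 1) (hv : ‖v‖ < 1) :
    pseudoDist u v ≤ (‖u‖ + ‖v‖) / (1 + ‖u‖ * ‖v‖) := by
  set p := ‖u‖ with hp
  set q := ‖v‖ with hq
  have hp0 : 0 ≤ p := norm_nonneg u
  have hq0 : 0 ≤ q := norm_nonneg v
  have hd : (1 : ℂ) - (starRingEnd ℂ) v * u ≠ 0 := one_sub_conj_mul_ne_zero hv hu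
  have hB : 0 < ‖1 - (starRingEnd ℂ) v * u‖ := norm_pos_iff.mpr hd
  set A := ‖u - v‖ with hA
  set B := ‖1 - (starRingEnd ℂ) v * u‖ with hBdef
  have hA0 : 0 ≤ A := norm_nonneg _
  set x := ((starRingEnd ℂ) v * u).re with hx
  have hxl : -(q * p) ≤ x := by
    have h1 : |x| ≤ ‖(starRingEnd ℂ) v * u‖ := Complex.abs_re_le_norm _
    rw [norm_mul, Complex.norm_conj] at h1
    have := neg_abs_le x
    nlinarith
  have hA2 : A ^ 2 = p ^ 2 + q ^ 2 - 2 * x := by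
    rw [hA, Complex.sq_norm, normSq_sub', ← Complex.sq_norm u, ← Complex.sq_norm v]
  have hB2 : B ^ 2 = 1 + q ^ 2 * p ^ 2 - 2 * x := by
    rw [hBdef, Complex.sq_norm, normSq_one_sub', ← Complex.sq_norm u, ← Complex.sq_norm v]
  have hpq : 0 < 1 + p * q := by nlinarith
  rw [pseudoDist, norm_div, div_le_div_iff₀ hB hpq]
  have key : (A * (1 + p * q)) ^ 2 ≤ ((p + q) * B) ^ 2 := by
    have h1 : 0 ≤ (x + q * p) * ((1 + p * q) ^ 2 - (p + q) ^ 2) := by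
      apply mul_nonneg (by linarith)
      have h2 : 0 ≤ (1-p)*(1-q) := mul_nonneg (by linarith) (by linarith)
      have h3 : 0 ≤ (1+p)*(1+q) := by nlinarith
      nlinarith [mul_nonneg h2 h3]
    nlinarith [hA2, hB2]
  nlinarith [key, mul_nonneg hA0 (le_of_lt hpq), mul_nonneg (add_nonneg hp0 hq0) (le_of_lt hB)]
lemma pseudoDist_moebius {z w x : ℂ} (hz : ‖z‖ < 1) (hw : ‖w‖ < 1)
    (hx : ‖x‖ < 1) :
    pseudoDist ((z - w) / (1 - (starRingEnd ℂ) w * z)) ((x - w) / (1 - (starRingEnd ℂ) w * x))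
      = pseudoDist z x := by
  have hd1 : (1 : ℂ) - (starRingEnd ℂ) w * z ≠ 0 := one_sub_conj_mul_ne_zero hw hz
  have hd2 : (1 : ℂ) - (starRingEnd ℂ) w * x ≠ 0 := one_sub_conj_mul_ne_zero hw hx
  have hd2' : (1 : ℂ) - w * (starRingEnd ℂ) x ≠ 0 := by
    intro h; apply hd2
    have := congrArg (starRingEnd ℂ) h
    simpa [map_sub, map_mul] using this
  have hdw : (1 : ℂ) - (starRingEnd ℂ) w * w ≠ 0 := one_sub_conj_mul_ne_zero hw hw
  have hdzx : (1 : ℂ) - (starRingEnd ℂ) x * z ≠ 0 := one_sub_conj_mul_ne_zero hx hz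
  set u := (z - w) / (1 - (starRingEnd ℂ) w * z) with hu
  set v := (x - w) / (1 - (starRingEnd ℂ) w * x) with hv
  have hcv : (starRingEnd ℂ) v
      = ((starRingEnd ℂ) x - (starRingEnd ℂ) w) / (1 - w * (starRingEnd ℂ) x) := by
    rw [hv, map_div₀]; congr 1 <;> simp [map_sub, map_mul]
  have e1 : u - v = ((z - x) * (1 - (starRingEnd ℂ) w * w))
      / ((1 - (starRingEnd ℂ) w * z) * (1 - (starRingEnd ℂ) w * x)) := by
    rw [hu, hv, div_sub_div _ _ hd1 hd2]; congr 1; ring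
  have e2 : 1 - (starRingEnd ℂ) v * u
      = ((1 - (starRingEnd ℂ) x * z) * (1 - (starRingEnd ℂ) w * w))
        / ((1 - w * (starRingEnd ℂ) x) * (1 - (starRingEnd ℂ) w * z)) := by
    rw [hcv, hu, div_mul_div_comm, one_sub_div (mul_ne_zero hd2' hd1)]; congr 1; ring
  have habs : ‖1 - w * (starRingEnd ℂ) x‖ = ‖1 - (starRingEnd ℂ) w * x‖ := by
    rw [← Complex.norm_conj (1 - w * (starRingEnd ℂ) x)]
    congr 1; simp [map_sub, map_mul]
  rw [pseudoDist, e1, e2]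
  simp only [norm_div, norm_mul]
  rw [habs, pseudoDist, norm_div]
  have n1 : ‖1 - (starRingEnd ℂ) w * z‖ ≠ 0 := norm_ne_zero_iff.mpr hd1
  have n2 : ‖1 - (starRingEnd ℂ) w * x‖ ≠ 0 := norm_ne_zero_iff.mpr hd2
  have n3 : ‖1 - (starRingEnd ℂ) w * w‖ ≠ 0 := norm_ne_zero_iff.mpr hdw
  have n4 : ‖1 - (starRingEnd ℂ) x * z‖ ≠ 0 := norm_ne_zero_iff.mpr hdzx
  field_simp
  rw [div_eq_div_iff (mul_ne_zero (mul_ne_zero (by rwa [mul_comm z]) (by rwa [mul_comm x]))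
    (by rwa [mul_comm z])) (by rwa [mul_comm z])]
  ring

lemma pseudoDist_triangle_mul {z w x : ℂ} (hz : ‖z‖ < 1) (hw : ‖w‖ < 1)
    (hx : ‖x‖ < 1) :
    pseudoDist z x * (1 + pseudoDist z w * pseudoDist w x) ≤ pseudoDist z w + pseudoDist w x := by
  have h1 : ‖(z - w) / (1 - (starRingEnd ℂ) w * z)‖ = pseudoDist z w := rfl
  have h2 : ‖(x - w) / (1 - (starRingEnd ℂ) w * x)‖ = pseudoDist x w := rfl
  have hu1 : ‖(z - w) / (1 - (starRingEnd ℂ) w * z)‖ < 1 := by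
    rw [h1]; exact pseudoDist_lt_one hz hw
  have hu2 : ‖(x - w) / (1 - (starRingEnd ℂ) w * x)‖ < 1 := by
    rw [h2]; exact pseudoDist_lt_one hx hw
  have h := model_triangle hu1 hu2
  rw [pseudoDist_moebius hz hw hx, h1, h2, pseudoDist_symm x w] at h
  have hpos : (0:ℝ) < 1 + pseudoDist z w * pseudoDist w x := by
    nlinarith [pseudoDist_nonneg z w, pseudoDist_nonneg w x]
  rw [le_div_iff₀ hpos] at h
  exact h

lemma ratio_mul {z w x : ℂ} (hz : ‖z‖ < 1) (hw : ‖w‖ < 1)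
    (hx : ‖x‖ < 1) :
    (1 + pseudoDist z x) / (1 - pseudoDist z x)
      ≤ (1 + pseudoDist z w) / (1 - pseudoDist z w)
        * ((1 + pseudoDist w x) / (1 - pseudoDist w x)) := by
  have key := pseudoDist_triangle_mul hz hw hx
  have h0 : 0 ≤ pseudoDist z x := pseudoDist_nonneg z x
  have h1 : 0 ≤ pseudoDist z w := pseudoDist_nonneg z w
  have h2 : 0 ≤ pseudoDist w x := pseudoDist_nonneg w x
  have l0 : pseudoDist z x < 1 := pseudoDist_lt_one hz hx
  have l1 : pseudoDist z w < 1 := pseudoDist_lt_one hz hw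
  have l2 : pseudoDist w x < 1 := pseudoDist_lt_one hw hx
  rw [div_mul_div_comm, div_le_div_iff₀ (by linarith) (by nlinarith)]
  nlinarith

lemma abs_blaschkeFactor {a z : ℂ} (ha : a ≠ 0) :
    ‖blaschkeFactor a z‖ = pseudoDist z a := by
  unfold blaschkeFactor pseudoDist
  rw [norm_mul, norm_div, Complex.norm_conj, Complex.norm_real,
    Real.norm_of_nonneg (norm_nonneg a), div_self (norm_ne_zero_iff.mpr ha), one_mul,
    norm_div, norm_div, norm_sub_rev a z]

lemma blaschkeFactor_sub_one {a z : ℂ} (ha : a ≠ 0) (hden : 1 - (starRingEnd ℂ) a * z ≠ 0) :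
    blaschkeFactor a z - 1
      = -(((1 - (‖a‖ : ℂ)) * ((‖a‖ : ℂ) + (starRingEnd ℂ) a * z))
        / ((‖a‖ : ℂ) * (1 - (starRingEnd ℂ) a * z))) := by
  have hca : (‖a‖ : ℂ) ≠ 0 := by
    simpa using norm_ne_zero_iff.mpr ha
  have h2 : (starRingEnd ℂ) a * a = ((‖a‖ : ℂ)) ^ 2 := by
    rw [← Complex.normSq_eq_conj_mul_self]
    norm_cast
    exact (Complex.sq_norm a).symm
  unfold blaschkeFactor
  field_simp
  linear_combination h2

lemma blaschkeFactor_sub_one_abs_le {a z : ℂ} (ha : a ≠ 0) (ha1 : ‖a‖ < 1)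
    (hz : ‖z‖ < 1) :
    ‖blaschkeFactor a z - 1‖ ≤ 2 * (1 - ‖a‖) / (1 - ‖z‖) := by
  have hden : 1 - (starRingEnd ℂ) a * z ≠ 0 := one_sub_conj_mul_ne_zero ha1 hz
  rw [blaschkeFactor_sub_one ha hden, norm_neg, norm_div, norm_mul, norm_mul]
  have ha0 : 0 < ‖a‖ := norm_pos_iff.mpr ha
  have e1 : ‖1 - (‖a‖ : ℂ)‖ = 1 - ‖a‖ := by
    rw [show (1 : ℂ) - (‖a‖ : ℂ) = ((1 - ‖a‖ : ℝ) : ℂ) by push_cast; ring,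
      Complex.norm_real, Real.norm_of_nonneg (by linarith)]
  have e2 : ‖(‖a‖ : ℂ) + (starRingEnd ℂ) a * z‖ ≤ 2 * ‖a‖ := by
    refine le_trans (norm_add_le _ _) ?_
    rw [Complex.norm_real, Real.norm_of_nonneg (le_of_lt ha0), norm_mul, Complex.norm_conj]
    nlinarith [norm_nonneg z]
  have e3 : 1 - ‖z‖ ≤ ‖1 - (starRingEnd ℂ) a * z‖ := by
    have h := norm_add_le (1 - (starRingEnd ℂ) a * z) ((starRingEnd ℂ) a * z)
    simp only [sub_add_cancel, norm_one] at h
    rw [norm_mul, Complex.norm_conj] at h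
    nlinarith [norm_nonneg z, norm_nonneg (1 - (starRingEnd ℂ) a * z)]
  rw [e1, Complex.norm_real, Real.norm_of_nonneg (le_of_lt ha0)]
  have hz1 : 0 < 1 - ‖z‖ := by linarith
  calc (1 - ‖a‖) * ‖(‖a‖ : ℂ) + (starRingEnd ℂ) a * z‖
        / (‖a‖ * ‖1 - (starRingEnd ℂ) a * z‖)
      ≤ (1 - ‖a‖) * (2 * ‖a‖) / (‖a‖ * (1 - ‖z‖)) := by
        apply div_le_div₀ (mul_nonneg (by linarith) (by positivity))
          (mul_le_mul_of_nonneg_left e2 (by linarith)) (by positivity)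
          (mul_le_mul_of_nonneg_left e3 (le_of_lt ha0))
    _ = 2 * (1 - ‖a‖) / (1 - ‖z‖) := by
        field_simp

lemma summable_log_blaschke {a : ℕ → ℂ} (h0 : ∀ n, a n ∈ unitDisk ∧ a n ≠ 0)
    (hsum : Summable fun n => 1 - ‖a n‖) {z : ℂ} (hz : ‖z‖ < 1) :
    Summable (fun n => Complex.log (blaschkeFactor (a n) z)) := by
  have hz1 : 0 < 1 - ‖z‖ := by linarith
  have htend : Filter.Tendsto (fun n => 1 - ‖a n‖) Filter.atTop (nhds 0) :=
    hsum.tendsto_atTop_zero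
  have hev : ∀ᶠ n in Filter.atTop, 1 - ‖a n‖ < (1 - ‖z‖) / 4 := by
    have := htend.eventually_lt_const (by positivity : (0:ℝ) < (1 - ‖z‖) / 4)
    exact this
  obtain ⟨N, hN⟩ := Filter.eventually_atTop.mp hev
  rw [← summable_nat_add_iff N]
  apply Summable.of_norm_bounded
    (g := fun n => 3 / (1 - ‖z‖) * (1 - ‖a (n + N)‖))
  · exact (((summable_nat_add_iff N).mpr hsum).mul_left _)
  · intro n
    have hb := blaschkeFactor_sub_one_abs_le (h0 (n + N)).2
      (mem_unitDisk.mp (h0 (n + N)).1) hz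
    have hsmall : ‖blaschkeFactor (a (n + N)) z - 1‖ ≤ 1 / 2 := by
      refine hb.trans ?_
      rw [div_le_div_iff₀ hz1 (by norm_num : (0:ℝ) < 2)]
      have := hN (n + N) (by omega)
      nlinarith
    have hlog : ‖Complex.log (1 + (blaschkeFactor (a (n + N)) z - 1))‖
        ≤ 3 / 2 * ‖blaschkeFactor (a (n + N)) z - 1‖ := by
      apply Complex.norm_log_one_add_half_le_self
      exact hsmall
    rw [add_sub_cancel] at hlog
    refine hlog.trans ?_
    calc 3 / 2 * ‖blaschkeFactor (a (n + N)) z - 1‖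
        ≤ 3 / 2 * (2 * (1 - ‖a (n + N)‖) / (1 - ‖z‖)) := by
          apply mul_le_mul_of_nonneg_left hb (by norm_num)
      _ = 3 / (1 - ‖z‖) * (1 - ‖a (n + N)‖) := by
          field_simp

lemma multipliable_blaschke {a : ℕ → ℂ} (h0 : ∀ n, a n ∈ unitDisk ∧ a n ≠ 0)
    (hsum : Summable fun n => 1 - ‖a n‖) {z : ℂ} (hz : ‖z‖ < 1)
    (hne : ∀ n, blaschkeFactor (a n) z ≠ 0) :
    Multipliable (fun n => blaschkeFactor (a n) z) :=
  Complex.multipliable_of_summable_log (summable_log_blaschke h0 hsum hz)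

lemma summable_real_log_blaschke {a : ℕ → ℂ} (h0 : ∀ n, a n ∈ unitDisk ∧ a n ≠ 0)
    (hsum : Summable fun n => 1 - ‖a n‖) {z : ℂ} (hz : ‖z‖ < 1) :
    Summable (fun n => Real.log (pseudoDist z (a n))) := by
  have h := summable_log_blaschke h0 hsum hz
  have h2 : Summable (fun n => (Complex.log (blaschkeFactor (a n) z)).re) :=
    ⟨_, Complex.hasSum_re h.hasSum⟩
  refine h2.congr fun n => ?_
  rw [Complex.log_re, abs_blaschkeFactor (h0 n).2]

lemma hasProd_zero_of_eq_zero {f : ℕ → ℂ} (j : ℕ) (hj : f j = 0) : HasProd f 0 := by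
  have hev : ∀ᶠ s : Finset ℕ in Filter.atTop, ∏ i ∈ s, f i = 0 := by
    filter_upwards [Filter.eventually_ge_atTop ({j} : Finset ℕ)] with s hs
    exact Finset.prod_eq_zero (hs (Finset.mem_singleton_self j)) hj
  exact Filter.Tendsto.congr' (hev.mono fun s hs => hs.symm) tendsto_const_nhds

lemma log_ratio_le {u v c : ℝ} (hu0 : 0 < u) (hu : u ≤ 1/7) (hv0 : 0 < v) (hv : v < 1)
    (hc : 1 ≤ c) (huv : u ≤ c * v) :
    Real.log ((1 + u) / (1 - u)) ≤ 2 * c * Real.log ((1 + v) / (1 - v)) := by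
  have h1u : (0:ℝ) < 1 - u := by linarith
  have h1v : (0:ℝ) < 1 - v := by linarith
  have L1 : Real.log ((1 + u) / (1 - u)) ≤ 13 * u / 6 := by
    rw [Real.log_div (by linarith) (ne_of_gt h1u)]
    have a1 : Real.log (1 + u) ≤ u := by
      have h := Real.log_le_sub_one_of_pos (show (0:ℝ) < 1 + u by linarith)
      linarith
    have a2 : Real.log ((1 - u)⁻¹) ≤ (1 - u)⁻¹ - 1 :=
      Real.log_le_sub_one_of_pos (by positivity)
    rw [Real.log_inv] at a2
    have a3 : (1 - u)⁻¹ - 1 = u / (1 - u) := by field_simp; ring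
    have a4 : u / (1 - u) ≤ 7 / 6 * u := by
      rw [div_le_iff₀ h1u]; nlinarith
    linarith
  have L2 : 2 * v / (1 + v) ≤ Real.log ((1 + v) / (1 - v)) := by
    have h := Real.log_le_sub_one_of_pos (show (0:ℝ) < (1 - v) / (1 + v) by positivity)
    have e : Real.log ((1 - v) / (1 + v)) = -Real.log ((1 + v) / (1 - v)) := by
      rw [← Real.log_inv, inv_div]
    have e2 : 1 - (1 - v) / (1 + v) = 2 * v / (1 + v) := by
      field_simp; ring
    rw [e] at h
    linarith [e2 ▸ (by linarith : 1 - (1 - v) / (1 + v) ≤ Real.log ((1 + v) / (1 - v)))]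
  by_cases hcase : v ≤ 11 / 13
  · have h13 : 13 * v / 12 ≤ 2 * v / (1 + v) := by
      rw [div_le_div_iff₀ (by norm_num) (by linarith)]
      nlinarith
    have hL2' : 13 * v / 12 ≤ Real.log ((1 + v) / (1 - v)) := le_trans h13 L2
    calc Real.log ((1 + u) / (1 - u)) ≤ 13 * u / 6 := L1
      _ ≤ 13 * (c * v) / 6 := by linarith
      _ = 2 * c * (13 * v / 12) := by ring
      _ ≤ 2 * c * Real.log ((1 + v) / (1 - v)) :=
          mul_le_mul_of_nonneg_left hL2' (by linarith)
  · push_neg at hcase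
    have h11 : (11:ℝ) / 12 ≤ 2 * v / (1 + v) := by
      rw [le_div_iff₀ (by linarith)]
      nlinarith
    have hL2' : (11:ℝ) / 12 ≤ Real.log ((1 + v) / (1 - v)) := le_trans h11 L2
    have h2 : (11:ℝ) / 6 ≤ 2 * c * Real.log ((1 + v) / (1 - v)) := by nlinarith
    linarith

/-- If `B` is a Blaschke product with zero sequence `{zₙ}`, `w ∈ 𝔻` satisfies
`β(w, zₙ) > 1` for all `n`, and there is `ζ ∈ 𝔻` with `β(ζ,w) ≤ K` and `|B(ζ)| > δ`,
then `|B(w)| ≥ δ^(2 e^{2K})`. -/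
theorem blaschke_lower_bound
    (B : ℂ → ℂ) (a : ℕ → ℂ) (hB : IsBlaschkeProduct B 0 a)
    (K δ : ℝ) (hK : 0 < K) (hδ0 : 0 < δ) (hδ1 : δ < 1)
    (w : ℂ) (hw : w ∈ unitDisk) (hsep : ∀ n, 1 < hypDist w (a n))
    (ζ : ℂ) (hζ : ζ ∈ unitDisk) (hζw : hypDist ζ w ≤ K)
    (hζB : δ < ‖B ζ‖) :
    δ ^ (2 * Real.exp (2 * K)) ≤ ‖B w‖ := by
  obtain ⟨h0, hsum, hrep⟩ := hB
  have hwA : ‖w‖ < 1 := mem_unitDisk.mp hw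
  have hζA : ‖ζ‖ < 1 := mem_unitDisk.mp hζ
  have haA : ∀ n, ‖a n‖ < 1 := fun n => mem_unitDisk.mp (h0 n).1
  set t : ℕ → ℝ := fun n => pseudoDist w (a n) with ht
  set s : ℕ → ℝ := fun n => pseudoDist ζ (a n) with hs
  have ht0 : ∀ n, 0 ≤ t n := fun n => pseudoDist_nonneg _ _
  have hs0' : ∀ n, 0 ≤ s n := fun n => pseudoDist_nonneg _ _
  have ht1 : ∀ n, t n < 1 := fun n => pseudoDist_lt_one hwA (haA n)
  have hs1 : ∀ n, s n < 1 := fun n => pseudoDist_lt_one hζA (haA n)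
  -- hsep gives exp 2 < (1+t n)/(1-t n)
  have hE : ∀ n, Real.exp 2 < (1 + t n) / (1 - t n) := by
    intro n
    have h := hsep n
    rw [hypDist] at h
    have hpos : (0:ℝ) < (1 + t n) / (1 - t n) :=
      div_pos (by linarith [ht0 n]) (by linarith [ht1 n])
    exact (Real.lt_log_iff_exp_lt hpos).mp (by linarith)
  have htpos : ∀ n, 0 < t n := by
    intro n
    have h := hE n
    have h1 : (0:ℝ) < 1 - t n := by linarith [ht1 n]
    rcases lt_or_eq_of_le (ht0 n) with h' | h'
    · exact h'
    · exfalso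
      rw [← h'] at h
      simp at h
      nlinarith [Real.exp_one_gt_d9, Real.add_one_le_exp (1:ℝ),
        (by rw [← Real.exp_add]; norm_num : Real.exp 1 * Real.exp 1 = Real.exp 2)]
  -- ζ-side: B ζ = ∏ factors, all factors nonzero since |B ζ| > δ > 0
  have hBζ : B ζ = ∏' n, blaschkeFactor (a n) ζ := by
    rw [hrep ζ hζ, pow_zero, one_mul]
  have hspos : ∀ n, 0 < s n := by
    intro n
    rcases lt_or_eq_of_le (hs0' n) with h' | h'
    · exact h'
    · exfalso
      have hf0 : blaschkeFactor (a n) ζ = 0 := by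
        have : ‖blaschkeFactor (a n) ζ‖ = 0 := by
          rw [abs_blaschkeFactor (h0 n).2]; exact h'.symm
        exact norm_eq_zero.mp this
      have := (hasProd_zero_of_eq_zero (f := fun n => blaschkeFactor (a n) ζ) n hf0).tprod_eq
      rw [hBζ, this] at hζB
      simp at hζB
      linarith
  have hneζ : ∀ n, blaschkeFactor (a n) ζ ≠ 0 := by
    intro n h
    have h2 := abs_blaschkeFactor (a := a n) (z := ζ) (h0 n).2
    rw [h, norm_zero] at h2
    exact (hspos n).ne' h2.symm
  have hnew : ∀ n, blaschkeFactor (a n) w ≠ 0 := by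
    intro n h
    have h2 := abs_blaschkeFactor (a := a n) (z := w) (h0 n).2
    rw [h, norm_zero] at h2
    exact (htpos n).ne' h2.symm
  have hmulζ := multipliable_blaschke h0 hsum hζA hneζ
  have hmulw := multipliable_blaschke h0 hsum hwA hnew
  have hlogs : Summable (fun n => Real.log (s n)) := summable_real_log_blaschke h0 hsum hζA
  have hlogt : Summable (fun n => Real.log (t n)) := summable_real_log_blaschke h0 hsum hwA
  -- |B z| = exp (∑ log ρ)
  have habsζ : ‖B ζ‖ = ∏' n, s n := by
    rw [hBζ, hmulζ.norm_tprod]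
    exact tprod_congr fun n => by
      rw [abs_blaschkeFactor (h0 n).2]
  have habsw : ‖B w‖ = ∏' n, t n := by
    rw [hrep w hw, pow_zero, one_mul, hmulw.norm_tprod]
    exact tprod_congr fun n => by
      rw [abs_blaschkeFactor (h0 n).2]
  have hexpζ : ∏' n, s n = Real.exp (∑' n, Real.log (s n)) := by
    have h := Real.rexp_tsum_eq_tprod (fun n => hspos n) hlogs
    exact h.symm
  have hexpw : ∏' n, t n = Real.exp (∑' n, Real.log (t n)) := by
    have h := Real.rexp_tsum_eq_tprod (fun n => htpos n) hlogt
    exact h.symm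
  -- per-factor inequality
  set c := Real.exp (2 * K) with hcdef
  have hc1 : 1 ≤ c := by
    rw [hcdef, ← Real.exp_zero]
    exact Real.exp_le_exp.mpr (by linarith)
  have hrK : (1 + pseudoDist ζ w) / (1 - pseudoDist ζ w) ≤ c := by
    have hr1 : pseudoDist ζ w < 1 := pseudoDist_lt_one hζA hwA
    have hr0 : 0 ≤ pseudoDist ζ w := pseudoDist_nonneg _ _
    have hpos : (0:ℝ) < (1 + pseudoDist ζ w) / (1 - pseudoDist ζ w) :=
      div_pos (by linarith) (by linarith)
    have h := hζw
    rw [hypDist] at h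
    rw [hcdef]
    exact (Real.log_le_iff_le_exp hpos).mp (by linarith)
  have hperfactor : ∀ n, 2 * c * Real.log (s n) ≤ Real.log (t n) := by
    intro n
    set u := (1 - t n) / (1 + t n) with hudef
    set v := (1 - s n) / (1 + s n) with hvdef
    have htp := htpos n; have htl := ht1 n
    have hsp := hspos n; have hsl := hs1 n
    have hu0 : 0 < u := div_pos (by linarith) (by linarith)
    have hv0 : 0 < v := div_pos (by linarith) (by linarith)
    have hv1 : v < 1 := by
      rw [hvdef, div_lt_one (by linarith)]; linarith
    have hu17 : u ≤ 1 / 7 := by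
      have hEn := hE n
      have he2 : (7:ℝ) ≤ Real.exp 2 := by
        nlinarith [Real.exp_one_gt_d9,
          (by rw [← Real.exp_add]; norm_num : Real.exp 1 * Real.exp 1 = Real.exp 2)]
      rw [hudef, div_le_div_iff₀ (by linarith) (by norm_num)]
      have h7 : (7:ℝ) < (1 + t n) / (1 - t n) := lt_of_le_of_lt he2 hEn
      rw [lt_div_iff₀ (by linarith)] at h7
      linarith
    have huv : u ≤ c * v := by
      have htri := ratio_mul hζA hwA (haA n)
      -- (1+s)/(1-s) ≤ ((1+r)/(1-r)) * ((1+t)/(1-t)) ≤ c * ((1+t)/(1-t))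
      have hr1 : pseudoDist ζ w < 1 := pseudoDist_lt_one hζA hwA
      have hr0 : 0 ≤ pseudoDist ζ w := pseudoDist_nonneg _ _
      have hBt : (0:ℝ) < (1 + t n) / (1 - t n) := div_pos (by linarith) (by linarith)
      have hAs : (0:ℝ) < (1 + s n) / (1 - s n) := div_pos (by linarith) (by linarith)
      have hcpos : (0:ℝ) < c := lt_of_lt_of_le one_pos hc1
      have h1 : (1 + s n) / (1 - s n) ≤ c * ((1 + t n) / (1 - t n)) := by
        refine le_trans htri ?_
        exact mul_le_mul_of_nonneg_right hrK (le_of_lt hBt)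
      have hu' : u = ((1 + t n) / (1 - t n))⁻¹ := by rw [hudef, inv_div]
      have hv' : v = ((1 + s n) / (1 - s n))⁻¹ := by rw [hvdef, inv_div]
      rw [hu', hv']
      have h1' : (1 + s n) / (1 - s n) / c ≤ (1 + t n) / (1 - t n) :=
        (div_le_iff₀ hcpos).mpr (by linarith [h1])
      have h2 : ((1 + t n) / (1 - t n))⁻¹ ≤ ((1 + s n) / (1 - s n) / c)⁻¹ :=
        inv_anti₀ (div_pos hAs hcpos) h1'
      refine le_trans h2 (le_of_eq ?_)
      rw [inv_div, div_eq_mul_inv]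
    have hkey := log_ratio_le hu0 hu17 hv0 hv1 hc1 huv
    have heu : (1 + u) / (1 - u) = (t n)⁻¹ := by
      rw [hudef]
      field_simp
      rw [div_eq_iff (by intro h; linarith)]
      ring
    have hev : (1 + v) / (1 - v) = (s n)⁻¹ := by
      rw [hvdef]
      field_simp
      rw [div_eq_iff (by intro h; linarith)]
      ring
    rw [heu, hev, Real.log_inv, Real.log_inv] at hkey
    linarith
  -- sum up
  have hsum2 : 2 * c * ∑' n, Real.log (s n) ≤ ∑' n, Real.log (t n) := by
    rw [← tsum_mul_left]
    exact Summable.tsum_le_tsum hperfactor (hlogs.mul_left _) hlogt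
  have hlogδ : Real.log δ < ∑' n, Real.log (s n) := by
    have h := hζB
    rw [habsζ, hexpζ] at h
    have := Real.log_lt_log hδ0 h
    rwa [Real.log_exp] at this
  rw [habsw, hexpw, Real.rpow_def_of_pos hδ0]
  apply Real.exp_le_exp.mpr
  have h2c : (0:ℝ) ≤ 2 * c := by linarith
  calc Real.log δ * (2 * Real.exp (2 * K)) = 2 * c * Real.log δ := by rw [hcdef]; ring
    _ ≤ 2 * c * ∑' n, Real.log (s n) := mul_le_mul_of_nonneg_left (le_of_lt hlogδ) h2c
    _ ≤ ∑' n, Real.log (t n) := hsum2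
end

section
/- Let K > 0 and let z, ζ, w ∈ 𝔻 satisfy ρ(ζ, w) ≤ (e^{2K}−1)/(e^{2K}+1) and ρ(w, z) ≥ tanh(1). Then ρ(w, z) ≥ ρ(z, ζ)^{2e^{2K}}; equivalently, log(1/ρ(w,z)) ≤ 2e^{2K}·log(1/ρ(z,ζ)) whenever z ≠ ζ. -/
open Complex Metric Set

namespace PseudoDistAux

lemma pd_symm (z w : ℂ) : pseudoDist z w = pseudoDist w z := by
  unfold pseudoDist
  rw [norm_div, norm_div]
  congr 1
  · exact norm_sub_rev z w
  · rw [← Complex.norm_conj]; congr 1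
    rw [map_sub, map_one, map_mul, Complex.conj_conj, mul_comm]

lemma denom_ne {z w : ℂ} (hz : ‖z‖ < 1) (hw : ‖w‖ < 1) :
    1 - (starRingEnd ℂ) w * z ≠ 0 := by
  intro h
  have h1 : (starRingEnd ℂ) w * z = 1 := by linear_combination -h
  have h2 : ‖(starRingEnd ℂ) w * z‖ = 1 := by rw [h1]; simp
  rw [norm_mul, Complex.norm_conj] at h2
  nlinarith [norm_nonneg z, norm_nonneg w]

lemma normSq_denom_sub (z w : ℂ) :
    Complex.normSq (1 - (starRingEnd ℂ) w * z) - Complex.normSq (z - w)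
      = (1 - Complex.normSq z) * (1 - Complex.normSq w) := by
  simp [Complex.normSq_apply, Complex.sub_re, Complex.sub_im, Complex.mul_re, Complex.mul_im]
  ring

lemma pd_lt_one {z w : ℂ} (hz : ‖z‖ < 1) (hw : ‖w‖ < 1) :
    pseudoDist z w < 1 := by
  have hd := denom_ne hz hw
  have hdpos : 0 < ‖1 - (starRingEnd ℂ) w * z‖ := by
    simpa [norm_pos_iff] using hd
  unfold pseudoDist
  rw [norm_div, div_lt_one hdpos]
  have key := normSq_denom_sub z w
  have h1 : Complex.normSq z < 1 := by rw [← Complex.sq_norm]; nlinarith [norm_nonneg z]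
  have h2 : Complex.normSq w < 1 := by rw [← Complex.sq_norm]; nlinarith [norm_nonneg w]
  have : ‖z - w‖ ^ 2 < ‖1 - (starRingEnd ℂ) w * z‖ ^ 2 := by
    rw [Complex.sq_norm, Complex.sq_norm]; nlinarith
  nlinarith [norm_nonneg (z - w)]

lemma tri_zero {a b : ℂ} (ha : ‖a‖ < 1) (hb : ‖b‖ < 1)
    (hd : 1 - (starRingEnd ℂ) b * a ≠ 0) :
    ‖a - b‖ / ‖1 - (starRingEnd ℂ) b * a‖
      ≤ (‖a‖ + ‖b‖) / (1 + ‖a‖ * ‖b‖) := by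
  set A := ‖a‖ with hA
  set B := ‖b‖ with hB
  have hA0 : 0 ≤ A := norm_nonneg a
  have hB0 : 0 ≤ B := norm_nonneg b
  set x := ((starRingEnd ℂ) b * a).re with hxdef
  have hxb : |x| ≤ B * A := by
    calc |x| ≤ ‖(starRingEnd ℂ) b * a‖ := Complex.abs_re_le_norm _
    _ = B * A := by rw [norm_mul, Complex.norm_conj]
  have hA2 : A ^ 2 = Complex.normSq a := Complex.sq_norm a
  have hB2 : B ^ 2 = Complex.normSq b := Complex.sq_norm b
  have hN1 : ‖a - b‖ ^ 2 = A ^ 2 + B ^ 2 - 2 * x := by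
    rw [Complex.sq_norm, hA2, hB2, hxdef]
    simp [Complex.normSq_apply, Complex.mul_re, Complex.sub_re, Complex.sub_im]
    ring
  have hN2 : ‖1 - (starRingEnd ℂ) b * a‖ ^ 2 = 1 + A ^ 2 * B ^ 2 - 2 * x := by
    rw [Complex.sq_norm, hA2, hB2, hxdef]
    simp [Complex.normSq_apply, Complex.mul_re, Complex.mul_im, Complex.sub_re, Complex.sub_im]
    ring
  have hdpos : 0 < ‖1 - (starRingEnd ℂ) b * a‖ := norm_pos_iff.mpr hd
  have h1pos : (0:ℝ) < 1 + A * B := by nlinarith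
  rw [div_le_div_iff₀ hdpos h1pos]
  have hsq : (‖a - b‖ * (1 + A * B)) ^ 2
      ≤ ((A + B) * ‖1 - (starRingEnd ℂ) b * a‖) ^ 2 := by
    rw [mul_pow, mul_pow, hN1, hN2]
    have hx1 : -(B*A) ≤ x := neg_le_of_abs_le hxb
    nlinarith [mul_nonneg (mul_nonneg (by linarith : (0:ℝ) ≤ x + A*B)
      (by nlinarith : (0:ℝ) ≤ 1 - A^2)) (by nlinarith : (0:ℝ) ≤ 1 - B^2)]
  have h2 := Real.sqrt_le_sqrt hsq
  rwa [Real.sqrt_sq (by positivity), Real.sqrt_sq (by positivity)] at h2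

lemma mobius_eq {z ζ w : ℂ} (hz : ‖z‖ < 1) (hζ : ‖ζ‖ < 1)
    (hw : ‖w‖ < 1) :
    pseudoDist z ζ =
      ‖(z - w)/(1 - (starRingEnd ℂ) w * z) - (ζ - w)/(1 - (starRingEnd ℂ) w * ζ)‖ /
      ‖1 - (starRingEnd ℂ) ((ζ - w)/(1 - (starRingEnd ℂ) w * ζ)) *
        ((z - w)/(1 - (starRingEnd ℂ) w * z))‖ := by
  have hdz := denom_ne hz hw
  have hdζ := denom_ne hζ hw
  have hdw := denom_ne hw hw
  have hdzζ := denom_ne hz hζ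
  have hdζc : (starRingEnd ℂ) (1 - (starRingEnd ℂ) w * ζ) ≠ 0 := by
    rw [ne_eq, starRingEnd_apply, star_eq_zero]; exact hdζ
  have eq1 : (z - w)/(1 - (starRingEnd ℂ) w * z) - (ζ - w)/(1 - (starRingEnd ℂ) w * ζ)
      = (z - ζ) * (1 - (starRingEnd ℂ) w * w) /
        ((1 - (starRingEnd ℂ) w * z) * (1 - (starRingEnd ℂ) w * ζ)) := by
    rw [div_sub_div _ _ hdz hdζ]; congr 1
    ring
  have eq2 : 1 - (starRingEnd ℂ) ((ζ - w)/(1 - (starRingEnd ℂ) w * ζ)) *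
        ((z - w)/(1 - (starRingEnd ℂ) w * z))
      = (1 - (starRingEnd ℂ) w * w) * (1 - (starRingEnd ℂ) ζ * z) /
        (((starRingEnd ℂ) (1 - (starRingEnd ℂ) w * ζ)) * (1 - (starRingEnd ℂ) w * z)) := by
    have hdζ' : (1 : ℂ) - w * (starRingEnd ℂ) ζ ≠ 0 := by
      simpa [map_sub, map_mul] using hdζc
    rw [map_div₀]
    rw [div_mul_div_comm, one_sub_div (mul_ne_zero hdζc hdz)]; congr 1
    simp only [map_sub, map_mul, map_one, Complex.conj_conj]
    ring
  rw [eq1, eq2, norm_div, norm_div]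
  simp only [norm_mul, Complex.norm_conj]
  have W0 : 0 < ‖1 - (starRingEnd ℂ) w * w‖ := norm_pos_iff.mpr hdw
  have D10 : 0 < ‖1 - (starRingEnd ℂ) w * z‖ := norm_pos_iff.mpr hdz
  have D20 : 0 < ‖1 - (starRingEnd ℂ) w * ζ‖ := norm_pos_iff.mpr hdζ
  have C0 : 0 < ‖1 - (starRingEnd ℂ) ζ * z‖ := norm_pos_iff.mpr hdzζ
  unfold pseudoDist
  rw [norm_div]
  field_simp
  have ha : ‖1 - z * (starRingEnd ℂ) w‖ ≠ 0 := by rw [mul_comm]; exact D10.ne'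
  have hb : ‖1 - ζ * (starRingEnd ℂ) w‖ ≠ 0 := by rw [mul_comm]; exact D20.ne'
  field_simp

lemma pd_triangle {z ζ w : ℂ} (hz : ‖z‖ < 1) (hζ : ‖ζ‖ < 1)
    (hw : ‖w‖ < 1) :
    pseudoDist z ζ ≤ (pseudoDist z w + pseudoDist ζ w)
      / (1 + pseudoDist z w * pseudoDist ζ w) := by
  have ha1 : ‖(z - w)/(1 - (starRingEnd ℂ) w * z)‖ < 1 := pd_lt_one hz hw
  have hb1 : ‖(ζ - w)/(1 - (starRingEnd ℂ) w * ζ)‖ < 1 := pd_lt_one hζ hw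
  have hd : 1 - (starRingEnd ℂ) ((ζ - w)/(1 - (starRingEnd ℂ) w * ζ)) *
      ((z - w)/(1 - (starRingEnd ℂ) w * z)) ≠ 0 := denom_ne ha1 hb1
  have h := tri_zero ha1 hb1 hd
  rw [mobius_eq hz hζ hw]
  exact h

lemma real_main {E t r s : ℝ} (hE : 1 < E)
    (hs0 : 0 ≤ s) (hsS : s ≤ (E - 1)/(E + 1))
    (ht1 : (Real.exp 2 - 1)/(Real.exp 2 + 1) ≤ t) (ht : t < 1)
    (hr0 : 0 ≤ r) (hrt : r ≤ (t + s)/(1 + t*s)) :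
    r ^ (2*E) ≤ t := by
  have he2 : (3:ℝ) ≤ Real.exp 2 := by nlinarith [Real.add_one_le_exp (2:ℝ)]
  have ht0 : 0 < t := lt_of_lt_of_le (div_pos (by linarith) (by linarith)) ht1
  have hT : Real.exp 2 - 1 ≤ t * (Real.exp 2 + 1) := by
    rw [div_le_iff₀ (by positivity)] at ht1; linarith
  set S := (E - 1)/(E + 1) with hSdef
  have hS : S * (E + 1) = E - 1 := by rw [hSdef]; field_simp
  have hS0 : 0 < S := div_pos (by linarith) (by linarith)
  have hS1 : S < 1 := by rw [hSdef, div_lt_one (by linarith)]; linarith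
  set R := (t + S)/(1 + t*S) with hRdef
  have hden : (0:ℝ) < 1 + t*S := by nlinarith
  have hdens : (0:ℝ) < 1 + t*s := by nlinarith
  have hrR : r ≤ R := by
    refine hrt.trans ?_
    rw [hRdef, div_le_div_iff₀ hdens hden]
    nlinarith [mul_nonneg (sub_nonneg.mpr hsS) (by nlinarith : (0:ℝ) ≤ 1 - t*t)]
  have hR0 : 0 < R := div_pos (by linarith) hden
  have hR1 : R < 1 := by rw [hRdef, div_lt_one hden]; nlinarith
  have hR' : (1 - R) * (1 + t*S) = (1 - t) * (1 - S) := by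
    rw [hRdef]; field_simp; ring
  have step1 : E + 1 ≤ t * (3*E + 1) := by
    nlinarith [mul_le_mul_of_nonneg_right hT (by linarith : (0:ℝ) ≤ 3*E + 1)]
  have step2 : 1 + t*S ≤ 2*E*t*(1 - S) := by
    nlinarith [step1, hS]
  have h1t0 : (0:ℝ) ≤ 1 - t := by linarith
  have h4 := mul_le_mul_of_nonneg_left step2 h1t0
  have h3 : (1 - t) * (1 + t*S) ≤ 2*E*(1 - R)*t*(1 + t*S) :=
    h4.trans_eq (by linear_combination (-(2*E*t)) * hR')
  have hkey : (1 - t)/t ≤ 2*E*(1 - R) := by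
    rw [div_le_iff₀ ht0]
    exact le_of_mul_le_mul_right h3 hden
  have hlogR : Real.log R ≤ R - 1 := Real.log_le_sub_one_of_pos hR0
  have hlogt : 1 - 1/t ≤ Real.log t := by
    have h := Real.log_le_sub_one_of_pos (inv_pos.mpr ht0)
    rw [Real.log_inv] at h
    rw [one_div]; linarith
  have hfrac : (1 - t)/t = 1/t - 1 := by field_simp
  have hplog : 2*E * Real.log R ≤ Real.log t := by
    have h5 : 2*E*Real.log R ≤ 2*E*(R - 1) := by nlinarith
    linarith [hkey, hfrac ▸ hkey]
  have hRp : R ^ (2*E) ≤ t := by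
    rw [Real.rpow_def_of_pos hR0]
    calc Real.exp (Real.log R * (2*E)) ≤ Real.exp (Real.log t) := by
          apply Real.exp_le_exp.mpr; linarith [hplog]
      _ = t := Real.exp_log ht0
  calc r ^ (2*E) ≤ R ^ (2*E) := Real.rpow_le_rpow hr0 hrR (by linarith)
    _ ≤ t := hRp

end PseudoDistAux

open PseudoDistAux in
/-- Let `K > 0` and `z, ζ, w ∈ 𝔻` with `ρ(ζ,w) ≤ (e^{2K}-1)/(e^{2K}+1)` and
`ρ(w,z) ≥ tanh 1`. Then `ρ(w,z) ≥ ρ(z,ζ)^(2 e^{2K})`; equivalently,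
`log(1/ρ(w,z)) ≤ 2 e^{2K} log(1/ρ(z,ζ))` whenever `z ≠ ζ`. -/
theorem pseudoDist_power_bound
    (K : ℝ) (hK : 0 < K) (z ζ w : ℂ)
    (hz : z ∈ unitDisk) (hζ : ζ ∈ unitDisk) (hw : w ∈ unitDisk)
    (h1 : pseudoDist ζ w ≤ (Real.exp (2 * K) - 1) / (Real.exp (2 * K) + 1))
    (h2 : Real.tanh 1 ≤ pseudoDist w z) :
    pseudoDist z ζ ^ (2 * Real.exp (2 * K)) ≤ pseudoDist w z ∧
    (z ≠ ζ →
      Real.log (1 / pseudoDist w z) ≤ 2 * Real.exp (2 * K) * Real.log (1 / pseudoDist z ζ)) := by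
  have hz' : ‖z‖ < 1 := by simpa [unitDisk, Complex.dist_eq] using hz
  have hζ' : ‖ζ‖ < 1 := by simpa [unitDisk, Complex.dist_eq] using hζ
  have hw' : ‖w‖ < 1 := by simpa [unitDisk, Complex.dist_eq] using hw
  have hE : 1 < Real.exp (2 * K) := by
    simpa using Real.exp_lt_exp.mpr (by linarith : (0:ℝ) < 2*K)
  have htanh : Real.tanh 1 = (Real.exp 2 - 1)/(Real.exp 2 + 1) := by
    rw [Real.tanh_eq_sinh_div_cosh, Real.sinh_eq, Real.cosh_eq]
    have h := Real.exp_ne_zero (1:ℝ)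
    have h2' : Real.exp 2 = Real.exp 1 * Real.exp 1 := by rw [← Real.exp_add]; norm_num
    rw [h2', Real.exp_neg]
    field_simp
  have ht1 : (Real.exp 2 - 1)/(Real.exp 2 + 1) ≤ pseudoDist w z := htanh ▸ h2
  have htlt : pseudoDist w z < 1 := pd_lt_one hw' hz'
  have hs0 : 0 ≤ pseudoDist ζ w := norm_nonneg _
  have hr0 : 0 ≤ pseudoDist z ζ := norm_nonneg _
  have htri := pd_triangle hz' hζ' hw'
  rw [pd_symm z w] at htri
  have part1 : pseudoDist z ζ ^ (2 * Real.exp (2 * K)) ≤ pseudoDist w z :=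
    real_main hE hs0 h1 ht1 htlt hr0 htri
  refine ⟨part1, fun hne => ?_⟩
  have hrpos : 0 < pseudoDist z ζ := by
    apply norm_pos_iff.mpr
    exact div_ne_zero (sub_ne_zero.mpr hne) (denom_ne hz' hζ')
  have htpos : 0 < pseudoDist w z :=
    lt_of_lt_of_le (div_pos (by nlinarith [Real.add_one_le_exp (2:ℝ)])
      (by positivity)) ht1
  have hlog := Real.log_le_log (by positivity) part1
  rw [Real.log_rpow hrpos] at hlog
  rw [one_div, one_div, Real.log_inv, Real.log_inv]
  linarith
end

section
/- Let z, ξ, ξ' ∈ 𝔻 with ρ(z, ξ')² ≥ 1/2. Then | 1 − ρ(z,ξ)²/ρ(z,ξ')² | ≤ 2·(1−|z|²)·( | (1−|ξ|²)/|1−conj(ξ)z|² − (1−|ξ|²)/|1−conj(ξ')z|² | + | |ξ'|² − |ξ|² | / |1−conj(ξ')z|² ). -/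
open Complex Metric Set

lemma denom_ne (z w : ℂ) (hz : ‖z‖ < 1) (hw : ‖w‖ < 1) :
    (1 - (starRingEnd ℂ) w * z) ≠ 0 := by
  intro hcon
  have h1 : (starRingEnd ℂ) w * z = 1 := by linear_combination -hcon
  have : ‖(starRingEnd ℂ) w * z‖ < 1 := by
    rw [norm_mul, Complex.norm_conj]
    calc ‖w‖ * ‖z‖ ≤ 1 * ‖z‖ := by
          exact mul_le_mul_of_nonneg_right hw.le (norm_nonneg z)
      _ < 1 := by simpa using hz
  rw [h1] at this; simp at this

lemma key (z w : ℂ) (hz : ‖z‖ < 1) (hw : ‖w‖ < 1) :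
    pseudoDist z w ^ 2 = 1 - (1 - ‖z‖ ^ 2) * (1 - ‖w‖ ^ 2) /
      ‖1 - (starRingEnd ℂ) w * z‖ ^ 2 := by
  have hne := denom_ne z w hz hw
  have habs : ‖1 - (starRingEnd ℂ) w * z‖ ≠ 0 := norm_ne_zero_iff.mpr hne
  have hnorm : Complex.normSq (z - w) =
      Complex.normSq (1 - (starRingEnd ℂ) w * z) -
        (1 - Complex.normSq z) * (1 - Complex.normSq w) := by
    simp [Complex.normSq_apply, Complex.mul_re, Complex.mul_im, Complex.sub_re,
      Complex.sub_im, Complex.one_re, Complex.one_im]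
    ring
  have hpos : Complex.normSq (1 - (starRingEnd ℂ) w * z) ≠ 0 :=
    (Complex.normSq_pos.mpr hne).ne'
  rw [pseudoDist, norm_div, div_pow]
  rw [Complex.sq_norm, Complex.sq_norm, Complex.sq_norm, Complex.sq_norm]
  field_simp
  rw [mul_comm z ((starRingEnd ℂ) w), eq_sub_iff_add_eq, ← add_div, div_eq_one_iff_eq hpos]
  linarith [hnorm]

/-- Let `z, ξ, ξ' ∈ 𝔻` with `ρ(z,ξ')² ≥ 1/2`. Then
`|1 − ρ(z,ξ)²/ρ(z,ξ')²| ≤ 2(1−|z|²)( |(1−|ξ|²)/|1−conj(ξ)z|² − (1−|ξ|²)/|1−conj(ξ')z|²|`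
`+ ||ξ'|² − |ξ|²| / |1−conj(ξ')z|² )`. -/
theorem pseudoDist_ratio_bound (z ξ ξ' : ℂ)
    (hz : z ∈ unitDisk) (hξ : ξ ∈ unitDisk) (hξ' : ξ' ∈ unitDisk)
    (h : (1 : ℝ) / 2 ≤ pseudoDist z ξ' ^ 2) :
    |1 - pseudoDist z ξ ^ 2 / pseudoDist z ξ' ^ 2| ≤
      2 * (1 - ‖z‖ ^ 2) *
        (|(1 - ‖ξ‖ ^ 2) / ‖1 - (starRingEnd ℂ) ξ * z‖ ^ 2 -
           (1 - ‖ξ‖ ^ 2) / ‖1 - (starRingEnd ℂ) ξ' * z‖ ^ 2| +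
         |‖ξ'‖ ^ 2 - ‖ξ‖ ^ 2| /
           ‖1 - (starRingEnd ℂ) ξ' * z‖ ^ 2) := by
  have hz1 : ‖z‖ < 1 := by simpa [unitDisk, Complex.dist_eq] using hz
  have hξ1 : ‖ξ‖ < 1 := by simpa [unitDisk, Complex.dist_eq] using hξ
  have hξ'1 : ‖ξ'‖ < 1 := by simpa [unitDisk, Complex.dist_eq] using hξ'
  have hk := key z ξ hz1 hξ1
  have hk' := key z ξ' hz1 hξ'1
  have hD : (0:ℝ) < ‖1 - (starRingEnd ℂ) ξ * z‖ ^ 2 :=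
    pow_pos (norm_pos_iff.mpr (denom_ne z ξ hz1 hξ1)) 2
  have hD' : (0:ℝ) < ‖1 - (starRingEnd ℂ) ξ' * z‖ ^ 2 :=
    pow_pos (norm_pos_iff.mpr (denom_ne z ξ' hz1 hξ'1)) 2
  set D := ‖1 - (starRingEnd ℂ) ξ * z‖ ^ 2 with hDdef
  set D' := ‖1 - (starRingEnd ℂ) ξ' * z‖ ^ 2 with hD'def
  set c := 1 - ‖z‖ ^ 2 with hcdef
  have hc : 0 < c := by
    have h0 := norm_nonneg z
    nlinarith
  set x := (1 - ‖ξ‖ ^ 2) / D with hxdef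
  set y := (1 - ‖ξ'‖ ^ 2) / D' with hydef
  set v := (1 - ‖ξ‖ ^ 2) / D' with hvdef
  set d := ‖ξ'‖ ^ 2 - ‖ξ‖ ^ 2 with hddef
  have hP : (0:ℝ) < pseudoDist z ξ' ^ 2 := lt_of_lt_of_le (by norm_num) h
  have hsub : pseudoDist z ξ' ^ 2 - pseudoDist z ξ ^ 2 = c * (x - y) := by
    rw [hk, hk']; ring
  have e0 : 1 - pseudoDist z ξ ^ 2 / pseudoDist z ξ' ^ 2
      = c * (x - y) / pseudoDist z ξ' ^ 2 := by
    rw [← hsub]; field_simp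
    rw [sub_div, div_self hP.ne']
  have e1 : |1 - pseudoDist z ξ ^ 2 / pseudoDist z ξ' ^ 2|
      = c * |x - y| / pseudoDist z ξ' ^ 2 := by
    rw [e0, abs_div, abs_of_pos hP, abs_mul, abs_of_pos hc]
  have hrw : x - y = (x - v) + d / D' := by
    rw [hxdef, hydef, hvdef, hddef]
    field_simp
    ring
  have hxy : |x - y| ≤ |x - v| + |d| / D' := by
    rw [hrw]
    calc |(x - v) + d / D'| ≤ |x - v| + |d / D'| := abs_add_le _ _
      _ = |x - v| + |d| / D' := by rw [abs_div, abs_of_pos hD']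
  calc |1 - pseudoDist z ξ ^ 2 / pseudoDist z ξ' ^ 2|
      = c * |x - y| / pseudoDist z ξ' ^ 2 := e1
    _ ≤ 2 * c * |x - y| := by
        rw [div_le_iff₀ hP]
        nlinarith [mul_le_mul_of_nonneg_left h (mul_nonneg hc.le (abs_nonneg (x - y)))]
    _ ≤ 2 * c * (|x - v| + |d| / D') := by
        apply mul_le_mul_of_nonneg_left hxy (by positivity)
end

section
/- Let z ∈ 𝔻 and let n ≥ 1 be an integer with 2^{n−1}(1−|z|) ≤ 1. Then for every ξ ∈ 𝔻 with ξ ∉ 2^{n−1}Q_z one has |1 − conj(ξ)z| ≥ 2^{n−3}·(1−|z|). -/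
open Complex Metric Set

/-- A Carleson square with angular center `θ₀` and side length `ℓ`. -/
def carlesonSquare (θ₀ ℓ : ℝ) : Set ℂ :=
  {z | ∃ r θ : ℝ, 0 < 1 - r ∧ 1 - r < ℓ ∧ |θ - θ₀| < Real.pi * ℓ ∧
    z = r * Complex.exp (θ * Complex.I)}

set_option maxHeartbeats 1600000 in
/-- Let `z ∈ 𝔻` and `n ≥ 1` with `2^{n-1}(1-|z|) ≤ 1`. Then for every `ξ ∈ 𝔻`
with `ξ ∉ 2^{n-1}Q_z` one has `|1 - conj(ξ)z| ≥ 2^{n-3}(1-|z|)`.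
Here `2^{n-1}Q_z` is the Carleson square with angular center `arg z` and side length
`2^{n-1}(1-|z|)`. -/
theorem outside_dilated_square_bound
    (z : ℂ) (hz : z ∈ unitDisk) (n : ℕ) (hn : 1 ≤ n)
    (hside : (2:ℝ) ^ ((n:ℤ) - 1) * (1 - ‖z‖) ≤ 1)
    (ξ : ℂ) (hξ : ξ ∈ unitDisk)
    (hout : ξ ∉ carlesonSquare (Complex.arg z) ((2:ℝ) ^ ((n:ℤ) - 1) * (1 - ‖z‖))) :
    (2:ℝ) ^ ((n:ℤ) - 3) * (1 - ‖z‖) ≤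
      ‖1 - (starRingEnd ℂ) ξ * z‖ := by
  have hz1 : ‖z‖ < 1 := by simpa [unitDisk] using hz
  have hξ1 : ‖ξ‖ < 1 := by simpa [unitDisk] using hξ
  set a : ℝ := 1 - ‖z‖ with ha
  have ha0 : 0 < a := by simp [ha]; linarith
  set L : ℝ := (2:ℝ) ^ ((n:ℤ) - 1) * a with hL
  have hL0 : 0 < L := by positivity
  have hL1 : L ≤ 1 := hside
  have hgoal : (2:ℝ) ^ ((n:ℤ) - 3) * a = L / 4 := by
    rw [hL, show ((n:ℤ) - 3) = ((n:ℤ) - 1) + (-2) by ring,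
      zpow_add₀ (two_ne_zero) ((n:ℤ) - 1) (-2)]
    norm_num
    ring
  rw [hgoal]
  clear_value L
  clear_value a
  -- trivial case z = 0
  by_cases hz0 : z = 0
  · simp [hz0]
    linarith
  -- Case A : ξ is radially far
  by_cases hA : L ≤ 1 - ‖ξ‖
  · have h1 : 1 - ‖(starRingEnd ℂ) ξ * z‖ ≤
        ‖1 - (starRingEnd ℂ) ξ * z‖ := by
      have := norm_sub_norm_le (1 : ℂ) ((starRingEnd ℂ) ξ * z)
      simpa using this
    have h2 : ‖(starRingEnd ℂ) ξ * z‖ ≤ ‖ξ‖ := by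
      rw [norm_mul, Complex.norm_conj]
      nlinarith [norm_nonneg ξ, norm_nonneg z]
    linarith
  -- Case B : angularly far
  push_neg at hA
  have hξ0 : ξ ≠ 0 := by
    intro h
    rw [h] at hA
    simp at hA
    linarith
  set w : ℂ := (starRingEnd ℂ) ξ * z with hw
  have hw0 : w ≠ 0 := mul_ne_zero (by simpa using hξ0) hz0
  clear_value w
  have habsw : ‖w‖ = ‖ξ‖ * ‖z‖ := by
    rw [hw, norm_mul, Complex.norm_conj]
  -- ξ = |ξ| exp((arg z - arg w) I)
  have habsz : (‖z‖ : ℂ) ≠ 0 := by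
    exact_mod_cast norm_ne_zero_iff.mpr hz0
  have habsξ : (‖ξ‖ : ℂ) ≠ 0 := by
    exact_mod_cast norm_ne_zero_iff.mpr hξ0
  have habsw' : (‖w‖ : ℂ) ≠ 0 := by
    exact_mod_cast norm_ne_zero_iff.mpr hw0
  have hrep : ξ = (‖ξ‖ : ℂ) *
      Complex.exp (((Complex.arg z - Complex.arg w : ℝ) : ℂ) * Complex.I) := by
    have hez : Complex.exp ((Complex.arg z : ℂ) * Complex.I) = z / (‖z‖ : ℂ) :=
      eq_div_of_mul_eq habsz (by rw [mul_comm]; exact Complex.norm_mul_exp_arg_mul_I z)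
    have hew : Complex.exp ((Complex.arg w : ℂ) * Complex.I) = w / (‖w‖ : ℂ) :=
      eq_div_of_mul_eq habsw' (by rw [mul_comm]; exact Complex.norm_mul_exp_arg_mul_I w)
    have hcc : (starRingEnd ℂ) ξ * ξ = ((‖ξ‖ : ℂ))^2 := by
      rw [mul_comm, Complex.mul_conj, Complex.normSq_eq_norm_sq]
      push_cast
      ring
    push_cast
    rw [sub_mul, Complex.exp_sub, hez, hew, habsw, hw]
    push_cast
    have hconj : (starRingEnd ℂ) ξ ≠ 0 := by simpa using hξ0
    field_simp
    linear_combination hcc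
  -- from hout, angular distance bound
  have hang : Real.pi * L ≤ |Complex.arg w| := by
    by_contra hcon
    push_neg at hcon
    apply hout
    refine ⟨‖ξ‖, Complex.arg z - Complex.arg w, by linarith, hA, ?_, hrep⟩
    simpa [abs_sub_comm] using hcon
  have hangle : |Complex.arg w| ≤ Real.pi := Complex.abs_arg_le_pi w
  -- the quantitative estimate
  set ρ : ℝ := ‖w‖ with hρ
  have hρ0 : 0 < ρ := norm_pos_iff.mpr hw0
  clear_value ρ
  have hρ1 : ρ < 1 := by
    rw [habsw]
    nlinarith [norm_nonneg ξ, norm_nonneg z]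
  have habs_sq : ‖1 - w‖ ^ 2 = 1 - 2 * ρ * Real.cos (Complex.arg w) + ρ ^ 2 := by
    have hre : w.re = ρ * Real.cos (Complex.arg w) := by
      rw [Complex.cos_arg hw0, hρ]
      rw [mul_div_cancel₀ _ (norm_ne_zero_iff.mpr hw0)]
    have him : w.im = ρ * Real.sin (Complex.arg w) := by
      rw [Complex.sin_arg, hρ]
      rw [mul_div_cancel₀ _ (norm_ne_zero_iff.mpr hw0)]
    have h2 : ρ ^ 2 = w.re ^ 2 + w.im ^ 2 := by
      rw [hρ, Complex.sq_norm, Complex.normSq_apply]; ring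
    rw [Complex.sq_norm, Complex.normSq_apply]
    simp only [Complex.sub_re, Complex.sub_im, Complex.one_re, Complex.one_im]
    nlinarith [Real.sin_sq_add_cos_sq (Complex.arg w)]
  by_cases hρsmall : ρ < 1/4
  · have h1 : 1 - ρ ≤ ‖1 - w‖ := by
      have := norm_sub_norm_le (1 : ℂ) w
      simpa [hρ] using this
    linarith
  push_neg at hρsmall
  have hcos : Real.cos (Complex.arg w) ≤ 1 - 2 / Real.pi ^ 2 * (Complex.arg w) ^ 2 :=
    Real.cos_le_one_sub_mul_cos_sq hangle
  have hπ : 0 < Real.pi := Real.pi_pos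
  have harg2 : (Real.pi * L)^2 ≤ (Complex.arg w)^2 := by
    have h := pow_le_pow_left₀ (by positivity) hang 2
    rwa [_root_.sq_abs] at h
  have hfinal_sq : L ^ 2 ≤ ‖1 - w‖ ^ 2 := by
    rw [habs_sq]
    have h1 : 2 / Real.pi ^ 2 * (Complex.arg w) ^ 2 ≥ 2 / Real.pi ^ 2 * (Real.pi * L)^2 := by
      apply mul_le_mul_of_nonneg_left harg2
      positivity
    have h2 : 2 / Real.pi ^ 2 * (Real.pi * L)^2 = 2 * L^2 := by
      field_simp
    have hcos2 : Real.cos (Complex.arg w) ≤ 1 - 2 * L ^ 2 := by linarith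
    have h3 : 2 * ρ * Real.cos (Complex.arg w) ≤ 2 * ρ * (1 - 2 * L ^ 2) := by
      apply mul_le_mul_of_nonneg_left hcos2; linarith
    nlinarith [sq_nonneg (1 - ρ), mul_nonneg (by linarith : (0:ℝ) ≤ 4 * ρ - 1) (sq_nonneg L)]
  have : L ≤ ‖1 - w‖ := by
    have h := Real.sqrt_le_sqrt hfinal_sq
    rwa [Real.sqrt_sq hL0.le, Real.sqrt_sq (norm_nonneg _)] at h
  linarith
end
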